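/- (Theorem 2.) Let Z and H be countable alphabets, m ≥ 1, and Q a learning kernel assigning to each S ∈ Z^m a pmf Q(·|S) on H. Define the learning capacity C^(m) as the supremum over all probability mass functions P on Z of the mutual affinity I(Z_trn, H) computed under P. Then for every pmf P on Z and every loss function L : H × Z → ℝ with values in [0,1], the true and empirical risks satisfy |R − R_emp| ≤ C^(m). -/

import Mathlib

/-- Total variation distance between two pmfs: `1 - ∑ min`. -/
noncomputable def tv {A : Type*} (p q : A → ℝ) : ℝ := 1 - ∑' a, min (p a) (q a)

/-- `p` is a probability mass function: nonnegative and summing to `1`. -/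
def IsPMF {A : Type*} (p : A → ℝ) : Prop := (∀ a, 0 ≤ p a) ∧ HasSum p 1

/-- Product pmf `P^{⊗m}` of `m` i.i.d. draws from `P`. -/
noncomputable def prodPMF {Z : Type*} (m : ℕ) (P : Z → ℝ) (S : Fin m → Z) : ℝ :=
  ∏ i, P (S i)

/-- Joint pmf of a uniformly drawn training example `Z_trn` and the inferred
hypothesis `H`: `μ(z,h) = ∑_S P^{⊗m}(S) · (1/m)∑_i 1{S_i = z} · Q(h|S)`. -/
noncomputable def jointZH {Z H : Type*} (m : ℕ) (P : Z → ℝ)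
    (Q : (Fin m → Z) → H → ℝ) (z : Z) (h : H) : ℝ :=
  haveI := Classical.decEq Z
  ∑' S : Fin m → Z,
    prodPMF m P S * ((1 / (m : ℝ)) * ∑ i, if S i = z then (1 : ℝ) else 0) * Q S h

/-- Marginal of `Z_trn` under the joint pmf `jointZH`. -/
noncomputable def margZ {Z H : Type*} (m : ℕ) (P : Z → ℝ)
    (Q : (Fin m → Z) → H → ℝ) (z : Z) : ℝ :=
  ∑' h : H, jointZH m P Q z h

/-- Marginal of the hypothesis `H` under the joint pmf `jointZH`. -/
noncomputable def margH {Z H : Type*} (m : ℕ) (P : Z → ℝ)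
    (Q : (Fin m → Z) → H → ℝ) (h : H) : ℝ :=
  ∑' z : Z, jointZH m P Q z h

/-- Mutual affinity `I(Z_trn, H) = ‖μ_Z ⊗ μ_H, μ‖`. -/
noncomputable def affinity {Z H : Type*} (m : ℕ) (P : Z → ℝ)
    (Q : (Fin m → Z) → H → ℝ) : ℝ :=
  tv (fun p : Z × H => margZ m P Q p.1 * margH m P Q p.2)
    (fun p : Z × H => jointZH m P Q p.1 p.2)

/-- True risk `R(𝓛) = ∑_S P^{⊗m}(S) ∑_h Q(h|S) ∑_z P(z)·L(h,z)`. -/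
noncomputable def trueRisk {Z H : Type*} (m : ℕ) (P : Z → ℝ)
    (Q : (Fin m → Z) → H → ℝ) (L : H → Z → ℝ) : ℝ :=
  ∑' S : Fin m → Z, prodPMF m P S * ∑' h : H, Q S h * ∑' z : Z, P z * L h z

/-- Empirical risk `R_emp(𝓛) = ∑_S P^{⊗m}(S) ∑_h Q(h|S)·(1/m)∑_i L(h,S_i)`. -/
noncomputable def empRisk {Z H : Type*} (m : ℕ) (P : Z → ℝ)
    (Q : (Fin m → Z) → H → ℝ) (L : H → Z → ℝ) : ℝ :=
  ∑' S : Fin m → Z, prodPMF m P S * ∑' h : H, Q S h * ((1 / (m : ℝ)) * ∑ i, L h (S i))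

/-- Learning capacity `C^(m)(𝓛) = sup_P I(Z_trn, H)`. -/
noncomputable def capacity {Z H : Type*} (m : ℕ)
    (Q : (Fin m → Z) → H → ℝ) : ℝ :=
  sSup {c : ℝ | ∃ P : Z → ℝ, IsPMF P ∧ c = affinity m P Q}


open scoped ENNReal
open ENNReal

lemma tsum_pi_prod {Z : Type*} : ∀ (n : ℕ) (g : Fin n → Z → ℝ≥0∞),
    ∑' S : Fin n → Z, ∏ i, g i (S i) = ∏ i, ∑' z, g i z := by
  intro n
  induction n with
  | zero =>
    intro g
    haveI : Unique (Fin 0 → Z) := ⟨⟨fun i => i.elim0⟩, fun f => funext fun i => i.elim0⟩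
    rw [tsum_eq_single (default : Fin 0 → Z) (fun b hb => absurd (Subsingleton.elim b default) hb)]
    simp
  | succ n ih =>
    intro g
    rw [← (Fin.consEquiv fun _ : Fin (n+1) => Z).tsum_eq]
    have h1 : ∀ p : Z × (Fin n → Z),
        (∏ i, g i ((Fin.consEquiv fun _ : Fin (n+1) => Z) p i))
          = g 0 p.1 * ∏ i : Fin n, g i.succ (p.2 i) := by
      intro p
      rw [Fin.prod_univ_succ]
      simp [Fin.consEquiv]
    rw [tsum_congr h1,
      show (∑' b : Z × (Fin n → Z), g 0 b.1 * ∏ i : Fin n, g i.succ (b.2 i))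
        = ∑' z, ∑' t : Fin n → Z, g 0 z * ∏ i : Fin n, g i.succ (t i) from ENNReal.tsum_prod (f := fun (z : Z) (t : Fin n → Z) => g 0 z * ∏ i : Fin n, g i.succ (t i))]
    have h2 : ∀ z : Z, ∑' t : Fin n → Z, g 0 z * ∏ i : Fin n, g i.succ (t i)
        = g 0 z * ∏ i : Fin n, ∑' w, g i.succ w := by
      intro z
      rw [ENNReal.tsum_mul_left, ih]
    rw [tsum_congr h2, ENNReal.tsum_mul_right, Fin.prod_univ_succ]

section mach
variable {Z H : Type*}

noncomputable def eP (P : Z → ℝ) (z : Z) : ℝ≥0∞ := ENNReal.ofReal (P z)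

noncomputable def ePm (m : ℕ) (P : Z → ℝ) (S : Fin m → Z) : ℝ≥0∞ := ∏ i, eP P (S i)

noncomputable def eNu (m : ℕ) (S : Fin m → Z) (z : Z) : ℝ≥0∞ :=
  haveI := Classical.decEq Z
  (m : ℝ≥0∞)⁻¹ * ∑ i, if S i = z then 1 else 0

lemma eP_ne_top (P : Z → ℝ) (z : Z) : eP P z ≠ ∞ := ENNReal.ofReal_ne_top

lemma ePm_ne_top (m : ℕ) (P : Z → ℝ) (S : Fin m → Z) : ePm m P S ≠ ∞ := by
  rw [ePm, ← lt_top_iff_ne_top]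
  exact ENNReal.prod_lt_top (fun i _ => lt_top_iff_ne_top.2 (eP_ne_top P (S i)))

lemma eNu_ne_top {m : ℕ} (hm : m ≠ 0) (S : Fin m → Z) (z : Z) : eNu m S z ≠ ∞ := by
  classical
  refine ENNReal.mul_ne_top ?_ ?_
  · simp [ENNReal.inv_ne_top, hm]
  · rw [← lt_top_iff_ne_top]
    refine ENNReal.sum_lt_top.2 fun i _ => ?_
    split <;> simp

lemma sum_eP {P : Z → ℝ} (hP0 : ∀ z, 0 ≤ P z) (hP1 : HasSum P 1) :
    ∑' z, eP P z = 1 := by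
  simp only [eP]
  rw [← ENNReal.ofReal_tsum_of_nonneg hP0 hP1.summable, hP1.tsum_eq, ENNReal.ofReal_one]

lemma sum_ePm (m : ℕ) {P : Z → ℝ} (hP0 : ∀ z, 0 ≤ P z) (hP1 : HasSum P 1) :
    ∑' S : Fin m → Z, ePm m P S = 1 := by
  have h := tsum_pi_prod m (fun _ : Fin m => fun z => eP P z)
  simp only [ePm]
  rw [h, Finset.prod_congr rfl fun i _ => sum_eP hP0 hP1, Finset.prod_const_one]

lemma sum_eNu {m : ℕ} (hm : m ≠ 0) (S : Fin m → Z) : ∑' z, eNu m S z = 1 := by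
  classical
  simp only [eNu]
  rw [ENNReal.tsum_mul_left, Summable.tsum_finsetSum fun i _ => ENNReal.summable]
  have h1 : ∀ i : Fin m, ∑' z, (if S i = z then (1:ℝ≥0∞) else 0) = 1 := by
    intro i
    rw [tsum_eq_single (S i) (fun b hb => by simp [Ne.symm hb])]
    simp
  rw [Finset.sum_congr rfl fun i _ => h1 i, Finset.sum_const, Finset.card_univ,
    Fintype.card_fin, nsmul_eq_mul, mul_one]
  exact ENNReal.inv_mul_cancel (by exact_mod_cast hm) (ENNReal.natCast_ne_top m)

lemma sum_ePm_eNu {m : ℕ} (hm : m ≠ 0) {P : Z → ℝ} (hP0 : ∀ z, 0 ≤ P z)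
    (hP1 : HasSum P 1) (z : Z) :
    ∑' S : Fin m → Z, ePm m P S * eNu m S z = eP P z := by
  classical
  have key : ∀ i : Fin m,
      ∑' S : Fin m → Z, ePm m P S * (if S i = z then (1:ℝ≥0∞) else 0) = eP P z := by
    intro i
    set g : Fin m → Z → ℝ≥0∞ :=
      fun j w => if j = i then (if w = z then eP P w else 0) else eP P w with hgdef
    have hg : ∀ S : Fin m → Z,
        ePm m P S * (if S i = z then (1:ℝ≥0∞) else 0) = ∏ j, g j (S j) := by
      intro S
      by_cases hS : S i = z
      · have h1 : ∀ j : Fin m, g j (S j) = eP P (S j) := by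
          intro j
          by_cases hj : j = i
          · subst hj; simp [hgdef, hS]
          · simp [hgdef, hj]
        rw [if_pos hS, mul_one, Finset.prod_congr rfl fun j _ => h1 j, ePm]
      · rw [if_neg hS, mul_zero,
          Finset.prod_eq_zero (Finset.mem_univ i) (by simp [hgdef, hS])]
    rw [tsum_congr hg, tsum_pi_prod]
    have h2 : ∀ j : Fin m, ∑' w, g j w = if j = i then eP P z else 1 := by
      intro j
      by_cases hj : j = i
      · have h3 : ∀ w, g j w = if w = z then eP P z else 0 := by
          intro w
          by_cases hw : w = z <;> simp [hgdef, hj, hw]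
        rw [tsum_congr h3, tsum_ite_eq z (fun _ => eP P z), if_pos hj]
      · simp only [hgdef, hj, ↓reduceIte]
        rw [sum_eP hP0 hP1]
    rw [Finset.prod_congr rfl fun j _ => h2 j,
      Finset.prod_eq_single i (fun j _ hj => if_neg hj) (by simp), if_pos rfl]
  have expand : ∀ S : Fin m → Z, ePm m P S * eNu m S z
      = (m : ℝ≥0∞)⁻¹ * ∑ i, ePm m P S * (if S i = z then (1:ℝ≥0∞) else 0) := by
    intro S
    rw [eNu, ← mul_assoc, mul_comm (ePm m P S) ((m:ℝ≥0∞))⁻¹, mul_assoc, Finset.mul_sum]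
  rw [tsum_congr expand, ENNReal.tsum_mul_left, Summable.tsum_finsetSum fun i _ => ENNReal.summable,
    Finset.sum_congr rfl fun i _ => key i, Finset.sum_const, Finset.card_univ,
    Fintype.card_fin, nsmul_eq_mul, ← mul_assoc,
    ENNReal.inv_mul_cancel (by exact_mod_cast hm) (ENNReal.natCast_ne_top m), one_mul]

noncomputable def eJoint (m : ℕ) (P : Z → ℝ) (Q : (Fin m → Z) → H → ℝ) (z : Z) (h : H) : ℝ≥0∞ :=
  ∑' S : Fin m → Z, ePm m P S * eNu m S z * ENNReal.ofReal (Q S h)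

noncomputable def eMargH (m : ℕ) (P : Z → ℝ) (Q : (Fin m → Z) → H → ℝ) (h : H) : ℝ≥0∞ :=
  ∑' S : Fin m → Z, ePm m P S * ENNReal.ofReal (Q S h)

variable {m : ℕ} {P : Z → ℝ} {Q : (Fin m → Z) → H → ℝ}

lemma sum_eQ (hQ : ∀ S, IsPMF (Q S)) (S : Fin m → Z) :
    ∑' h : H, ENNReal.ofReal (Q S h) = 1 := by
  rw [← ENNReal.ofReal_tsum_of_nonneg (hQ S).1 (hQ S).2.summable, (hQ S).2.tsum_eq,
    ENNReal.ofReal_one]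

/-- E5: the `Z`-marginal of the joint is `P`. -/
lemma eJoint_margZ (hm : m ≠ 0) (hP0 : ∀ z, 0 ≤ P z) (hP1 : HasSum P 1)
    (hQ : ∀ S, IsPMF (Q S)) (z : Z) :
    ∑' h : H, eJoint m P Q z h = eP P z := by
  simp only [eJoint]
  rw [ENNReal.tsum_comm]
  have h1 : ∀ S : Fin m → Z,
      ∑' h : H, ePm m P S * eNu m S z * ENNReal.ofReal (Q S h) = ePm m P S * eNu m S z := by
    intro S
    rw [ENNReal.tsum_mul_left, sum_eQ hQ, mul_one]
  rw [tsum_congr h1, sum_ePm_eNu hm hP0 hP1]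

/-- E4: the `H`-marginal of the joint is `eMargH`. -/
lemma eJoint_margH (hm : m ≠ 0) (h : H) :
    ∑' z : Z, eJoint m P Q z h = eMargH m P Q h := by
  simp only [eJoint, eMargH]
  rw [ENNReal.tsum_comm]
  refine tsum_congr fun S => ?_
  have h1 : ∀ z : Z, ePm m P S * eNu m S z * ENNReal.ofReal (Q S h)
      = ePm m P S * ENNReal.ofReal (Q S h) * eNu m S z := fun z => by ring
  rw [tsum_congr h1, ENNReal.tsum_mul_left, sum_eNu hm, mul_one]

lemma sum_eMargH (hP0 : ∀ z, 0 ≤ P z) (hP1 : HasSum P 1) (hQ : ∀ S, IsPMF (Q S)) :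
    ∑' h : H, eMargH m P Q h = 1 := by
  simp only [eMargH]
  rw [ENNReal.tsum_comm]
  have h1 : ∀ S : Fin m → Z, ∑' h : H, ePm m P S * ENNReal.ofReal (Q S h) = ePm m P S := by
    intro S
    rw [ENNReal.tsum_mul_left, sum_eQ hQ, mul_one]
  rw [tsum_congr h1, sum_ePm m hP0 hP1]

lemma sum_eJoint (hm : m ≠ 0) (hP0 : ∀ z, 0 ≤ P z) (hP1 : HasSum P 1)
    (hQ : ∀ S, IsPMF (Q S)) :
    ∑' p : Z × H, eJoint m P Q p.1 p.2 = 1 := by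
  rw [ENNReal.tsum_prod (f := fun z h => eJoint m P Q z h),
    tsum_congr fun z => eJoint_margZ hm hP0 hP1 hQ z, sum_eP hP0 hP1]

lemma eJoint_ne_top (hm : m ≠ 0) (hP0 : ∀ z, 0 ≤ P z) (hP1 : HasSum P 1)
    (hQ : ∀ S, IsPMF (Q S)) (z : Z) (h : H) : eJoint m P Q z h ≠ ∞ := by
  have h1 : eJoint m P Q z h ≤ ∑' p : Z × H, eJoint m P Q p.1 p.2 := ENNReal.le_tsum (z, h)
  rw [sum_eJoint hm hP0 hP1 hQ] at h1
  exact ne_top_of_le_ne_top ENNReal.one_ne_top h1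

lemma eMargH_ne_top (hP0 : ∀ z, 0 ≤ P z) (hP1 : HasSum P 1)
    (hQ : ∀ S, IsPMF (Q S)) (h : H) : eMargH m P Q h ≠ ∞ := by
  have h1 : eMargH m P Q h ≤ ∑' h : H, eMargH m P Q h := ENNReal.le_tsum h
  rw [sum_eMargH hP0 hP1 hQ] at h1
  exact ne_top_of_le_ne_top ENNReal.one_ne_top h1

lemma sum_prod_marg (hP0 : ∀ z, 0 ≤ P z) (hP1 : HasSum P 1) (hQ : ∀ S, IsPMF (Q S)) :
    ∑' p : Z × H, eP P p.1 * eMargH m P Q p.2 = 1 := by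
  rw [ENNReal.tsum_prod (f := fun z h => eP P z * eMargH m P Q h)]
  have h1 : ∀ z : Z, ∑' h : H, eP P z * eMargH m P Q h = eP P z := by
    intro z
    rw [ENNReal.tsum_mul_left, sum_eMargH hP0 hP1 hQ, mul_one]
  rw [tsum_congr h1, sum_eP hP0 hP1]

lemma toReal_ite {c : Prop} [Decidable c] :
    ((if c then (1:ℝ≥0∞) else 0)).toReal = if c then (1:ℝ) else 0 := by
  split <;> simp

lemma prodPMF_eq (hP0 : ∀ z, 0 ≤ P z) (S : Fin m → Z) :
    prodPMF m P S = (ePm m P S).toReal := by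
  rw [prodPMF, ePm, ENNReal.toReal_prod]
  exact Finset.prod_congr rfl fun i _ => (ENNReal.toReal_ofReal (hP0 (S i))).symm

lemma nu_eq (S : Fin m → Z) (z : Z) :
    haveI := Classical.decEq Z
    ((1 / (m : ℝ)) * ∑ i, if S i = z then (1:ℝ) else 0) = (eNu m S z).toReal := by
  classical
  rw [eNu, ENNReal.toReal_mul, ENNReal.toReal_inv, ENNReal.toReal_natCast, one_div,
    ENNReal.toReal_sum (fun i _ => by split <;> simp)]
  congr 1
  exact Finset.sum_congr rfl fun i _ => toReal_ite.symm

lemma jointZH_eq (hm : m ≠ 0) (hP0 : ∀ z, 0 ≤ P z) (hQ0 : ∀ S h, 0 ≤ Q S h)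
    (z : Z) (h : H) : jointZH m P Q z h = (eJoint m P Q z h).toReal := by
  classical
  rw [eJoint, ENNReal.tsum_toReal_eq (fun S => ENNReal.mul_ne_top
      (ENNReal.mul_ne_top (ePm_ne_top m P S) (eNu_ne_top hm S z)) ENNReal.ofReal_ne_top),
    jointZH]
  refine tsum_congr fun S => ?_
  rw [ENNReal.toReal_mul, ENNReal.toReal_mul, ENNReal.toReal_ofReal (hQ0 S h),
    ← prodPMF_eq hP0, ← nu_eq]

lemma margZ_eq (hm : m ≠ 0) (hP0 : ∀ z, 0 ≤ P z) (hP1 : HasSum P 1)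
    (hQ : ∀ S, IsPMF (Q S)) (z : Z) : margZ m P Q z = P z := by
  rw [margZ, tsum_congr fun h => jointZH_eq hm hP0 (fun S h => (hQ S).1 h) z h,
    ← ENNReal.tsum_toReal_eq (fun h => eJoint_ne_top hm hP0 hP1 hQ z h),
    eJoint_margZ hm hP0 hP1 hQ, eP, ENNReal.toReal_ofReal (hP0 z)]

lemma margH_eq (hm : m ≠ 0) (hP0 : ∀ z, 0 ≤ P z) (hP1 : HasSum P 1)
    (hQ : ∀ S, IsPMF (Q S)) (h : H) : margH m P Q h = (eMargH m P Q h).toReal := by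
  rw [margH, tsum_congr fun z => jointZH_eq hm hP0 (fun S h => (hQ S).1 h) z h,
    ← ENNReal.tsum_toReal_eq (fun z => eJoint_ne_top hm hP0 hP1 hQ z h),
    eJoint_margH hm]

lemma hasSum_of_enn {A : Type*} {f : A → ℝ} {g : A → ℝ≥0∞}
    (hfg : ∀ a, f a = (g a).toReal) (hg : ∑' a, g a = 1) : HasSum f 1 := by
  have hs : Summable f := by
    have := ENNReal.summable_toReal (by rw [hg]; exact ENNReal.one_ne_top)
    exact this.congr fun a => (hfg a).symm
  have ht : ∑' a, f a = 1 := by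
    rw [tsum_congr hfg, ← ENNReal.tsum_toReal_eq
      (fun a => ne_top_of_le_ne_top (by rw [hg]; exact ENNReal.one_ne_top) (ENNReal.le_tsum a)),
      hg, ENNReal.toReal_one]
  exact ht ▸ hs.hasSum

variable {L : H → Z → ℝ}

lemma cE_le_one (hP0 : ∀ z, 0 ≤ P z) (hP1 : HasSum P 1)
    (hL : ∀ h z, 0 ≤ L h z ∧ L h z ≤ 1) (h : H) :
    ∑' z, eP P z * ENNReal.ofReal (L h z) ≤ 1 := by
  calc ∑' z, eP P z * ENNReal.ofReal (L h z)
      ≤ ∑' z, eP P z * 1 :=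
        Summable.tsum_le_tsum (fun z => mul_le_mul_right (ENNReal.ofReal_le_one.2 (hL h z).2) _)
          ENNReal.summable ENNReal.summable
    _ = 1 := by simpa using sum_eP hP0 hP1

lemma cE_eq (hP0 : ∀ z, 0 ≤ P z) (hL : ∀ h z, 0 ≤ L h z ∧ L h z ≤ 1) (h : H) :
    ∑' z, P z * L h z = (∑' z, eP P z * ENNReal.ofReal (L h z)).toReal := by
  rw [ENNReal.tsum_toReal_eq (fun z => ENNReal.mul_ne_top (eP_ne_top P z) ENNReal.ofReal_ne_top)]
  refine tsum_congr fun z => ?_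
  rw [ENNReal.toReal_mul, eP, ENNReal.toReal_ofReal (hP0 z), ENNReal.toReal_ofReal (hL h z).1]

lemma innerTrue_le_one (hP0 : ∀ z, 0 ≤ P z) (hP1 : HasSum P 1) (hQ : ∀ S, IsPMF (Q S))
    (hL : ∀ h z, 0 ≤ L h z ∧ L h z ≤ 1) (S : Fin m → Z) :
    ∑' h : H, ENNReal.ofReal (Q S h) * (∑' z, eP P z * ENNReal.ofReal (L h z)) ≤ 1 := by
  calc ∑' h : H, ENNReal.ofReal (Q S h) * (∑' z, eP P z * ENNReal.ofReal (L h z))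
      ≤ ∑' h : H, ENNReal.ofReal (Q S h) * 1 :=
        Summable.tsum_le_tsum (fun h => mul_le_mul_right (cE_le_one hP0 hP1 hL h) _)
          ENNReal.summable ENNReal.summable
    _ = 1 := by simpa using sum_eQ hQ S

lemma trueRisk_eq (hP0 : ∀ z, 0 ≤ P z) (hP1 : HasSum P 1) (hQ : ∀ S, IsPMF (Q S))
    (hL : ∀ h z, 0 ≤ L h z ∧ L h z ≤ 1) :
    trueRisk m P Q L = (∑' p : Z × H,
      (eP P p.1 * eMargH m P Q p.2) * ENNReal.ofReal (L p.2 p.1)).toReal := by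
  have step1 : trueRisk m P Q L = (∑' S : Fin m → Z, ePm m P S *
      ∑' h : H, ENNReal.ofReal (Q S h) * (∑' z, eP P z * ENNReal.ofReal (L h z))).toReal := by
    rw [ENNReal.tsum_toReal_eq (fun S => ENNReal.mul_ne_top (ePm_ne_top m P S)
        (ne_top_of_le_ne_top ENNReal.one_ne_top (innerTrue_le_one hP0 hP1 hQ hL S))), trueRisk]
    refine tsum_congr fun S => ?_
    rw [ENNReal.toReal_mul, ← prodPMF_eq hP0,
      ENNReal.tsum_toReal_eq (fun h => ENNReal.mul_ne_top ENNReal.ofReal_ne_top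
        (ne_top_of_le_ne_top ENNReal.one_ne_top (cE_le_one hP0 hP1 hL h)))]
    refine congrArg (prodPMF m P S * ·) (tsum_congr fun h => ?_)
    rw [ENNReal.toReal_mul, ENNReal.toReal_ofReal ((hQ S).1 h), ← cE_eq hP0 hL]
  rw [step1]
  congr 1
  calc ∑' S : Fin m → Z, ePm m P S *
        ∑' h : H, ENNReal.ofReal (Q S h) * (∑' z, eP P z * ENNReal.ofReal (L h z))
      = ∑' S : Fin m → Z, ∑' h : H,
          ePm m P S * ENNReal.ofReal (Q S h) * (∑' z, eP P z * ENNReal.ofReal (L h z)) := by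
        refine tsum_congr fun S => ?_
        rw [← ENNReal.tsum_mul_left]
        exact tsum_congr fun h => by ring
    _ = ∑' h : H, ∑' S : Fin m → Z,
          ePm m P S * ENNReal.ofReal (Q S h) * (∑' z, eP P z * ENNReal.ofReal (L h z)) :=
        ENNReal.tsum_comm
    _ = ∑' h : H, eMargH m P Q h * (∑' z, eP P z * ENNReal.ofReal (L h z)) := by
        refine tsum_congr fun h => ?_
        rw [ENNReal.tsum_mul_right, eMargH]
    _ = ∑' h : H, ∑' z : Z, (eP P z * eMargH m P Q h) * ENNReal.ofReal (L h z) := by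
        refine tsum_congr fun h => ?_
        rw [← ENNReal.tsum_mul_left]
        exact tsum_congr fun z => by ring
    _ = ∑' z : Z, ∑' h : H, (eP P z * eMargH m P Q h) * ENNReal.ofReal (L h z) :=
        ENNReal.tsum_comm
    _ = ∑' p : Z × H, (eP P p.1 * eMargH m P Q p.2) * ENNReal.ofReal (L p.2 p.1) :=
        (ENNReal.tsum_prod (f := fun z h => (eP P z * eMargH m P Q h) * ENNReal.ofReal (L h z))).symm

lemma dE_eq_sum_nu (hm : m ≠ 0) (hL : ∀ h z, 0 ≤ L h z ∧ L h z ≤ 1) (S : Fin m → Z) (h : H) :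
    (m : ℝ≥0∞)⁻¹ * ∑ i, ENNReal.ofReal (L h (S i))
      = ∑' z, eNu m S z * ENNReal.ofReal (L h z) := by
  classical
  have h1 : ∀ z : Z, eNu m S z * ENNReal.ofReal (L h z)
      = (m : ℝ≥0∞)⁻¹ * ∑ i, (if S i = z then (1:ℝ≥0∞) else 0) * ENNReal.ofReal (L h z) := by
    intro z
    rw [eNu, mul_assoc, Finset.sum_mul]
  rw [tsum_congr h1, ENNReal.tsum_mul_left]
  congr 1
  rw [Summable.tsum_finsetSum fun i _ => ENNReal.summable]
  refine Finset.sum_congr rfl fun i _ => ?_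
  rw [tsum_eq_single (S i) (fun b hb => by simp [Ne.symm hb])]
  simp

lemma dE_ne_top (hm : m ≠ 0) (S : Fin m → Z) (h : H) :
    (m : ℝ≥0∞)⁻¹ * ∑ i, ENNReal.ofReal (L h (S i)) ≠ ∞ := by
  refine ENNReal.mul_ne_top (by simp [hm]) ?_
  rw [← lt_top_iff_ne_top]
  exact ENNReal.sum_lt_top.2 fun i _ => ENNReal.ofReal_lt_top

lemma dE_real (hm : m ≠ 0) (hL : ∀ h z, 0 ≤ L h z ∧ L h z ≤ 1) (S : Fin m → Z) (h : H) :
    (1 / (m:ℝ)) * ∑ i, L h (S i)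
      = ((m : ℝ≥0∞)⁻¹ * ∑ i, ENNReal.ofReal (L h (S i))).toReal := by
  rw [ENNReal.toReal_mul, ENNReal.toReal_inv, ENNReal.toReal_natCast, one_div,
    ENNReal.toReal_sum (fun i _ => ENNReal.ofReal_ne_top)]
  congr 1
  exact Finset.sum_congr rfl fun i _ => (ENNReal.toReal_ofReal (hL h (S i)).1).symm

lemma dE_le_one (hm : m ≠ 0) (hL : ∀ h z, 0 ≤ L h z ∧ L h z ≤ 1) (S : Fin m → Z) (h : H) :
    (m : ℝ≥0∞)⁻¹ * ∑ i, ENNReal.ofReal (L h (S i)) ≤ 1 := by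
  calc (m : ℝ≥0∞)⁻¹ * ∑ i, ENNReal.ofReal (L h (S i))
      ≤ (m : ℝ≥0∞)⁻¹ * ∑ _i : Fin m, 1 :=
        mul_le_mul_right (Finset.sum_le_sum fun i _ => ENNReal.ofReal_le_one.2 (hL h (S i)).2) _
    _ = 1 := by
        rw [Finset.sum_const, Finset.card_univ, Fintype.card_fin, nsmul_eq_mul, mul_one]
        exact ENNReal.inv_mul_cancel (by exact_mod_cast hm) (ENNReal.natCast_ne_top m)

lemma innerEmp_le_one (hm : m ≠ 0) (hQ : ∀ S, IsPMF (Q S))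
    (hL : ∀ h z, 0 ≤ L h z ∧ L h z ≤ 1) (S : Fin m → Z) :
    ∑' h : H, ENNReal.ofReal (Q S h) * ((m : ℝ≥0∞)⁻¹ * ∑ i, ENNReal.ofReal (L h (S i))) ≤ 1 := by
  calc ∑' h : H, ENNReal.ofReal (Q S h) * ((m : ℝ≥0∞)⁻¹ * ∑ i, ENNReal.ofReal (L h (S i)))
      ≤ ∑' h : H, ENNReal.ofReal (Q S h) * 1 :=
        Summable.tsum_le_tsum (fun h => mul_le_mul_right (dE_le_one hm hL S h) _)
          ENNReal.summable ENNReal.summable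
    _ = 1 := by simpa using sum_eQ hQ S

lemma empRisk_eq (hm : m ≠ 0) (hP0 : ∀ z, 0 ≤ P z) (hP1 : HasSum P 1)
    (hQ : ∀ S, IsPMF (Q S)) (hL : ∀ h z, 0 ≤ L h z ∧ L h z ≤ 1) :
    empRisk m P Q L = (∑' p : Z × H,
      eJoint m P Q p.1 p.2 * ENNReal.ofReal (L p.2 p.1)).toReal := by
  have step1 : empRisk m P Q L = (∑' S : Fin m → Z, ePm m P S *
      ∑' h : H, ENNReal.ofReal (Q S h) *
        ((m : ℝ≥0∞)⁻¹ * ∑ i, ENNReal.ofReal (L h (S i)))).toReal := by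
    rw [ENNReal.tsum_toReal_eq (fun S => ENNReal.mul_ne_top (ePm_ne_top m P S)
        (ne_top_of_le_ne_top ENNReal.one_ne_top (innerEmp_le_one hm hQ hL S))), empRisk]
    refine tsum_congr fun S => ?_
    rw [ENNReal.toReal_mul, ← prodPMF_eq hP0,
      ENNReal.tsum_toReal_eq (fun h => ENNReal.mul_ne_top ENNReal.ofReal_ne_top (dE_ne_top hm S h))]
    refine congrArg (prodPMF m P S * ·) (tsum_congr fun h => ?_)
    rw [ENNReal.toReal_mul, ENNReal.toReal_ofReal ((hQ S).1 h), ← dE_real hm hL S h]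
  rw [step1]
  congr 1
  calc ∑' S : Fin m → Z, ePm m P S * ∑' h : H, ENNReal.ofReal (Q S h) *
        ((m : ℝ≥0∞)⁻¹ * ∑ i, ENNReal.ofReal (L h (S i)))
      = ∑' S : Fin m → Z, ∑' h : H, ∑' z : Z,
          (ePm m P S * eNu m S z * ENNReal.ofReal (Q S h)) * ENNReal.ofReal (L h z) := by
        refine tsum_congr fun S => ?_
        rw [← ENNReal.tsum_mul_left]
        refine tsum_congr fun h => ?_
        rw [dE_eq_sum_nu hm hL S h, ← ENNReal.tsum_mul_left, ← ENNReal.tsum_mul_left]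
        refine tsum_congr fun z => ?_
        ring
    _ = ∑' z : Z, ∑' h : H, ∑' S : Fin m → Z,
          (ePm m P S * eNu m S z * ENNReal.ofReal (Q S h)) * ENNReal.ofReal (L h z) := by
        calc ∑' S : Fin m → Z, ∑' h : H, ∑' z : Z,
              (ePm m P S * eNu m S z * ENNReal.ofReal (Q S h)) * ENNReal.ofReal (L h z)
            = ∑' h : H, ∑' S : Fin m → Z, ∑' z : Z,
              (ePm m P S * eNu m S z * ENNReal.ofReal (Q S h)) * ENNReal.ofReal (L h z) :=
              ENNReal.tsum_comm
          _ = ∑' h : H, ∑' z : Z, ∑' S : Fin m → Z,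
              (ePm m P S * eNu m S z * ENNReal.ofReal (Q S h)) * ENNReal.ofReal (L h z) :=
              tsum_congr fun h => ENNReal.tsum_comm
          _ = ∑' z : Z, ∑' h : H, ∑' S : Fin m → Z,
              (ePm m P S * eNu m S z * ENNReal.ofReal (Q S h)) * ENNReal.ofReal (L h z) :=
              ENNReal.tsum_comm
    _ = ∑' z : Z, ∑' h : H, eJoint m P Q z h * ENNReal.ofReal (L h z) := by
        refine tsum_congr fun z => tsum_congr fun h => ?_
        rw [ENNReal.tsum_mul_right, eJoint]
    _ = ∑' p : Z × H, eJoint m P Q p.1 p.2 * ENNReal.ofReal (L p.2 p.1) :=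
        (ENNReal.tsum_prod (f := fun z h => eJoint m P Q z h * ENNReal.ofReal (L h z))).symm

lemma tv_bound {A : Type*} {p q f : A → ℝ} (hp0 : ∀ a, 0 ≤ p a) (hp : HasSum p 1)
    (hq0 : ∀ a, 0 ≤ q a) (hq : HasSum q 1) (hf0 : ∀ a, 0 ≤ f a) (hf1 : ∀ a, f a ≤ 1) :
    |(∑' a, p a * f a) - ∑' a, q a * f a| ≤ tv p q := by
  set r : A → ℝ := fun a => min (p a) (q a) with hrdef
  have hr0 : ∀ a, 0 ≤ r a := fun a => le_min (hp0 a) (hq0 a)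
  have sp : Summable p := hp.summable
  have sq : Summable q := hq.summable
  have sr : Summable r := sp.of_nonneg_of_le hr0 fun a => min_le_left _ _
  have smulf : ∀ {g : A → ℝ}, (∀ a, 0 ≤ g a) → Summable g → Summable (fun a => g a * f a) :=
    fun {g} hg0 hg => hg.of_nonneg_of_le (fun a => mul_nonneg (hg0 a) (hf0 a))
      (fun a => mul_le_of_le_one_right (hg0 a) (hf1 a))
  have spf : Summable (fun a => p a * f a) := smulf hp0 sp
  have sqf : Summable (fun a => q a * f a) := smulf hq0 sq
  have srf : Summable (fun a => r a * f a) := smulf hr0 sr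
  have key : ∀ (g : A → ℝ), (∀ a, 0 ≤ g a) → HasSum g 1 → (∀ a, r a ≤ g a) →
      Summable (fun a => g a * f a) →
      (0 ≤ (∑' a, g a * f a) - ∑' a, r a * f a ∧
        (∑' a, g a * f a) - ∑' a, r a * f a ≤ 1 - ∑' a, r a) := by
    intro g hg0 hg hrg sgf
    have sg : Summable g := hg.summable
    have h1 : ∑' a, (g a * f a - r a * f a) = (∑' a, g a * f a) - ∑' a, r a * f a :=
      Summable.tsum_sub sgf srf
    constructor
    · rw [← h1]
      exact tsum_nonneg fun a => by nlinarith [hrg a, hf0 a, hr0 a]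
    · have hterm : ∀ a, g a * f a - r a * f a ≤ g a - r a := by
        intro a
        nlinarith [mul_nonneg (sub_nonneg.2 (hrg a)) (sub_nonneg.2 (hf1 a))]
      have h2 : ∑' a, (g a * f a - r a * f a) ≤ ∑' a, (g a - r a) :=
        Summable.tsum_le_tsum hterm (sgf.sub srf) (sg.sub sr)
      have h3 : ∑' a, (g a - r a) = 1 - ∑' a, r a := by rw [Summable.tsum_sub sg sr, hg.tsum_eq]
      linarith
  obtain ⟨hpl, hpu⟩ := key p hp0 hp (fun a => min_le_left _ _) spf
  obtain ⟨hql, hqu⟩ := key q hq0 hq (fun a => min_le_right _ _) sqf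
  have htv : tv p q = 1 - ∑' a, r a := rfl
  rw [htv, abs_le]
  exact ⟨by linarith, by linarith⟩

lemma jointZH_nonneg (hP0 : ∀ z, 0 ≤ P z) (hQ : ∀ S, IsPMF (Q S)) (z : Z) (h : H) :
    0 ≤ jointZH m P Q z h := by
  classical
  refine tsum_nonneg fun S => ?_
  refine mul_nonneg (mul_nonneg (Finset.prod_nonneg fun i _ => hP0 (S i)) ?_) ((hQ S).1 h)
  refine mul_nonneg (by positivity) (Finset.sum_nonneg fun i _ => ?_)
  split <;> norm_num

lemma affinity_le_capacity (hQ : ∀ S, IsPMF (Q S)) {P : Z → ℝ} (hP : IsPMF P) :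
    affinity m P Q ≤ capacity m Q := by
  apply le_csSup
  · refine ⟨1, ?_⟩
    rintro c ⟨P', hP', rfl⟩
    have hn : 0 ≤ ∑' zh : Z × H,
        min (margZ m P' Q zh.1 * margH m P' Q zh.2) (jointZH m P' Q zh.1 zh.2) := by
      refine tsum_nonneg fun zh => le_min (mul_nonneg ?_ ?_) (jointZH_nonneg hP'.1 hQ _ _)
      · exact tsum_nonneg fun h => jointZH_nonneg hP'.1 hQ _ _
      · exact tsum_nonneg fun z => jointZH_nonneg hP'.1 hQ _ _
    simp only [affinity, tv]
    linarith
  · exact ⟨P, hP, rfl⟩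

end mach


/-- Theorem 2: for every distribution `P` of observations and
every loss `L : H × Z → [0,1]`, the difference between true and empirical risks
is bounded by the learning capacity `C^(m) = sup_P I(Z_trn, H)`. -/
theorem stmt10 {Z H : Type*} [Countable Z] [Countable H] (m : ℕ) (hm : 1 ≤ m)
    (Q : (Fin m → Z) → H → ℝ) (hQ : ∀ S, IsPMF (Q S)) :
    ∀ P : Z → ℝ, IsPMF P → ∀ L : H → Z → ℝ, (∀ h z, 0 ≤ L h z ∧ L h z ≤ 1) →
      |trueRisk m P Q L - empRisk m P Q L| ≤ capacity m Q := by
  intro P hP L hL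
  have hm0 : m ≠ 0 := Nat.one_le_iff_ne_zero.mp hm
  obtain ⟨hP0, hP1⟩ := hP
  set p : Z × H → ℝ := fun zh => margZ m P Q zh.1 * margH m P Q zh.2 with hpdef
  set q : Z × H → ℝ := fun zh => jointZH m P Q zh.1 zh.2 with hqdef
  have hqe : ∀ zh : Z × H, q zh = (eJoint m P Q zh.1 zh.2).toReal :=
    fun zh => jointZH_eq hm0 hP0 (fun S h => (hQ S).1 h) _ _
  have hpe : ∀ zh : Z × H, p zh = (eP P zh.1 * eMargH m P Q zh.2).toReal := by
    intro zh
    show margZ m P Q zh.1 * margH m P Q zh.2 = _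
    rw [margZ_eq hm0 hP0 hP1 hQ, margH_eq hm0 hP0 hP1 hQ, ENNReal.toReal_mul, eP,
      ENNReal.toReal_ofReal (hP0 zh.1)]
  have hpsum : HasSum p 1 := hasSum_of_enn hpe (sum_prod_marg hP0 hP1 hQ)
  have hqsum : HasSum q 1 := hasSum_of_enn hqe (sum_eJoint hm0 hP0 hP1 hQ)
  have hp0 : ∀ zh, 0 ≤ p zh := fun zh => (hpe zh) ▸ ENNReal.toReal_nonneg
  have hq0 : ∀ zh, 0 ≤ q zh := fun zh => (hqe zh) ▸ ENNReal.toReal_nonneg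
  have htrue : trueRisk m P Q L = ∑' zh : Z × H, p zh * L zh.2 zh.1 := by
    rw [trueRisk_eq hP0 hP1 hQ hL, ENNReal.tsum_toReal_eq
      (f := fun zh : Z × H => (eP P zh.1 * eMargH m P Q zh.2) * ENNReal.ofReal (L zh.2 zh.1))
      (fun zh => ENNReal.mul_ne_top
      (ENNReal.mul_ne_top (eP_ne_top P zh.1) (eMargH_ne_top hP0 hP1 hQ zh.2))
      ENNReal.ofReal_ne_top)]
    refine tsum_congr fun zh => ?_
    rw [ENNReal.toReal_mul, ENNReal.toReal_ofReal (hL zh.2 zh.1).1, ← hpe zh]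
  have hemp : empRisk m P Q L = ∑' zh : Z × H, q zh * L zh.2 zh.1 := by
    rw [empRisk_eq hm0 hP0 hP1 hQ hL, ENNReal.tsum_toReal_eq
      (f := fun zh : Z × H => eJoint m P Q zh.1 zh.2 * ENNReal.ofReal (L zh.2 zh.1))
      (fun zh => ENNReal.mul_ne_top
      (eJoint_ne_top hm0 hP0 hP1 hQ zh.1 zh.2) ENNReal.ofReal_ne_top)]
    refine tsum_congr fun zh => ?_
    rw [ENNReal.toReal_mul, ENNReal.toReal_ofReal (hL zh.2 zh.1).1, ← hqe zh]
  have hb := tv_bound (f := fun zh : Z × H => L zh.2 zh.1) hp0 hpsum hq0 hqsum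
    (fun zh => (hL zh.2 zh.1).1) (fun zh => (hL zh.2 zh.1).2)
  have haff : tv p q = affinity m P Q := by
    rw [hpdef, hqdef, affinity]
  calc |trueRisk m P Q L - empRisk m P Q L|
      = |(∑' zh : Z × H, p zh * L zh.2 zh.1) - ∑' zh : Z × H, q zh * L zh.2 zh.1| := by
        rw [htrue, hemp]
    _ ≤ tv p q := hb
    _ = affinity m P Q := haff
    _ ≤ capacity m Q := affinity_le_capacity hQ ⟨hP0, hP1⟩
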